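/- Let d ≥ 3 and let A, B, C be subsets of a finite set V such that A ∩ B ∩ C = ∅, the pairwise intersections A∩B, B∩C, C∩A each have cardinality between 1 and d−2, |A| = |B| = |C| = d, every element of V lies in at least one of A, B, C, and each element lies in at most two of them. Suppose D ⊆ V satisfies |D| ≥ d, |D ∩ X| ≤ d − 2 for X ∈ {A, B, C}, D ⊆ (A\(B∪C)) ∪ (B\(A∪C)) ∪ (C\(A∪B)), and the four-edge clutter {A, B, C, D} is such that deleting any single vertex or contracting any single vertex yields an interval clutter while {A,B,C,D} itself is not interval. Then D = (A\(B∪C)) ∪ (B\(A∪C)) ∪ (C\(A∪B)) and |D| = d. -/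
import Mathlib


/-- A family of subsets of a finite vertex type is an interval hypergraph if some
ordering of the vertices maps every edge to an interval. -/
def IsIntervalHypergraph (V : Type*) [Fintype V] (E : Set (Set V)) : Prop :=
  ∃ f : V ≃ Fin (Fintype.card V),
    ∀ H ∈ E, ∃ i j : Fin (Fintype.card V), ⇑f '' H = Set.Icc i j

lemma not_interval_of_cycle {W : Type*} [Fintype W] {E : Set (Set W)} {X Y Z : Set W}
    (hX : X ∈ E) (hY : Y ∈ E) (hZ : Z ∈ E)
    (hXY : (X ∩ Y).Nonempty) (hYZ : (Y ∩ Z).Nonempty) (hXZ : (X ∩ Z).Nonempty)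
    (htr : X ∩ Y ∩ Z = ∅) : ¬ IsIntervalHypergraph W E := by
  rintro ⟨f, hf⟩
  obtain ⟨i₁, j₁, h₁⟩ := hf X hX
  obtain ⟨i₂, j₂, h₂⟩ := hf Y hY
  obtain ⟨i₃, j₃, h₃⟩ := hf Z hZ
  obtain ⟨p, hpX, hpY⟩ := hXY
  obtain ⟨q, hqY, hqZ⟩ := hYZ
  obtain ⟨r, hrX, hrZ⟩ := hXZ
  have hp1 : f p ∈ Set.Icc i₁ j₁ := h₁ ▸ ⟨p, hpX, rfl⟩
  have hp2 : f p ∈ Set.Icc i₂ j₂ := h₂ ▸ ⟨p, hpY, rfl⟩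
  have hq2 : f q ∈ Set.Icc i₂ j₂ := h₂ ▸ ⟨q, hqY, rfl⟩
  have hq3 : f q ∈ Set.Icc i₃ j₃ := h₃ ▸ ⟨q, hqZ, rfl⟩
  have hr1 : f r ∈ Set.Icc i₁ j₁ := h₁ ▸ ⟨r, hrX, rfl⟩
  have hr3 : f r ∈ Set.Icc i₃ j₃ := h₃ ▸ ⟨r, hrZ, rfl⟩
  set m := max i₁ (max i₂ i₃) with hm
  have hm1 : m ∈ Set.Icc i₁ j₁ :=
    ⟨le_max_left _ _, max_le (hp1.1.trans hp1.2)
      (max_le (hp2.1.trans hp1.2) (hr3.1.trans hr1.2))⟩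
  have hm2 : m ∈ Set.Icc i₂ j₂ :=
    ⟨(le_max_left _ _).trans (le_max_right _ _), max_le (hp1.1.trans hp2.2)
      (max_le (hq2.1.trans hq2.2) (hq3.1.trans hq2.2))⟩
  have hm3 : m ∈ Set.Icc i₃ j₃ :=
    ⟨(le_max_right _ _).trans (le_max_right _ _), max_le (hr1.1.trans hr3.2)
      (max_le (hq2.1.trans hq3.2) (hq3.1.trans hq3.2))⟩
  rw [← h₁] at hm1; rw [← h₂] at hm2; rw [← h₃] at hm3
  obtain ⟨x₁, hx₁, he₁⟩ := hm1
  obtain ⟨x₂, hx₂, he₂⟩ := hm2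
  obtain ⟨x₃, hx₃, he₃⟩ := hm3
  have e12 : x₁ = x₂ := f.injective (he₁.trans he₂.symm)
  have e13 : x₁ = x₃ := f.injective (he₁.trans he₃.symm)
  have : x₁ ∈ X ∩ Y ∩ Z := ⟨⟨hx₁, e12 ▸ hx₂⟩, e13 ▸ hx₃⟩
  rw [htr] at this
  exact this

lemma minor_cycle_contra {V : Type*} [Fintype V] [DecidableEq V] {x : V}
    {E : Set (Set {v : V // v ≠ x})} {X Y Z : Set V}
    (hX : Subtype.val ⁻¹' X ∈ E) (hY : Subtype.val ⁻¹' Y ∈ E)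
    (hZ : Subtype.val ⁻¹' Z ∈ E)
    (hXY : ∃ y, y ∈ X ∩ Y ∧ y ≠ x) (hYZ : ∃ y, y ∈ Y ∩ Z ∧ y ≠ x)
    (hXZ : ∃ y, y ∈ X ∩ Z ∧ y ≠ x)
    (htr : X ∩ Y ∩ Z = ∅) (hint : IsIntervalHypergraph {v : V // v ≠ x} E) : False := by
  refine not_interval_of_cycle hX hY hZ ?_ ?_ ?_ ?_ hint
  · obtain ⟨y, hy, hne⟩ := hXY; exact ⟨⟨y, hne⟩, hy.1, hy.2⟩
  · obtain ⟨y, hy, hne⟩ := hYZ; exact ⟨⟨y, hne⟩, hy.1, hy.2⟩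
  · obtain ⟨y, hy, hne⟩ := hXZ; exact ⟨⟨y, hne⟩, hy.1, hy.2⟩
  · ext ⟨v, hv⟩
    simp only [Set.mem_inter_iff, Set.mem_preimage, Set.mem_empty_iff_false, iff_false]
    rintro ⟨⟨h1, h2⟩, h3⟩
    have : v ∈ X ∩ Y ∩ Z := ⟨⟨h1, h2⟩, h3⟩
    rw [htr] at this; exact this

lemma ncard_three {V : Type*} [Fintype V] {P Q R W : Set V} (h : W = P ∪ Q ∪ R)
    (hPQ : ∀ v, v ∈ P → v ∈ Q → False) (hPR : ∀ v, v ∈ P → v ∈ R → False)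
    (hQR : ∀ v, v ∈ Q → v ∈ R → False) :
    W.ncard = P.ncard + Q.ncard + R.ncard := by
  subst h
  rw [Set.ncard_union_eq (by
      rw [Set.disjoint_union_left]
      exact ⟨Set.disjoint_left.2 fun a ha hb => hPR a ha hb,
        Set.disjoint_left.2 fun a ha hb => hQR a ha hb⟩),
    Set.ncard_union_eq (Set.disjoint_left.2 fun a ha hb => hPQ a ha hb)]

/-- Case 1 of the classification of the fourth edge added to `O_{a,b,c;d}`:
if `D` avoids all pairwise intersections and the four-edge clutter is an excluded-minor
configuration, then `D` is the union of the three private regions and is small. -/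
theorem stmt_13 {V : Type*} [Fintype V] [DecidableEq V] {d : ℕ} (hd : 3 ≤ d)
    (A B C D : Set V)
    (hABC : A ∩ B ∩ C = ∅)
    (hab1 : 1 ≤ (A ∩ B).ncard) (hab2 : (A ∩ B).ncard ≤ d - 2)
    (hbc1 : 1 ≤ (B ∩ C).ncard) (hbc2 : (B ∩ C).ncard ≤ d - 2)
    (hca1 : 1 ≤ (C ∩ A).ncard) (hca2 : (C ∩ A).ncard ≤ d - 2)
    (hcardA : A.ncard = d) (hcardB : B.ncard = d) (hcardC : C.ncard = d)
    (hcover : A ∪ B ∪ C = Set.univ)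
    (hatmost2 : ∀ v : V, ¬ (v ∈ A ∧ v ∈ B ∧ v ∈ C))
    (hDcard : d ≤ D.ncard)
    (hDA : (D ∩ A).ncard ≤ d - 2) (hDB : (D ∩ B).ncard ≤ d - 2)
    (hDC : (D ∩ C).ncard ≤ d - 2)
    (hDsub : D ⊆ (A \ (B ∪ C)) ∪ (B \ (A ∪ C)) ∪ (C \ (A ∪ B)))
    (hnotint : ¬ IsIntervalHypergraph V ({A, B, C, D} : Set (Set V)))
    (hdel : ∀ x : V, IsIntervalHypergraph {v : V // v ≠ x}
      {H' : Set {v : V // v ≠ x} | ∃ H ∈ ({A, B, C, D} : Set (Set V)),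
        (x ∉ H ∧ H' = (Subtype.val ⁻¹' H)) ∨
        (x ∈ H ∧ d < H.ncard ∧ H' = (Subtype.val ⁻¹' H))})
    (hcon : ∀ x : V, IsIntervalHypergraph {v : V // v ≠ x}
      {H' : Set {v : V // v ≠ x} | ∃ H ∈ ({A, B, C, D} : Set (Set V)),
        x ∈ H ∧ H' = (Subtype.val ⁻¹' H)}) :
    D = (A \ (B ∪ C)) ∪ (B \ (A ∪ C)) ∪ (C \ (A ∪ B)) ∧ D.ncard = d := by
  -- triple intersections involving D are empty
  have hBCD : B ∩ C ∩ D = ∅ := by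
    ext v
    simp only [Set.mem_inter_iff, Set.mem_empty_iff_false, iff_false]
    rintro ⟨⟨hvB, hvC⟩, hvD⟩
    rcases hDsub hvD with (h | h) | h
    · exact h.2 (Or.inl hvB)
    · exact h.2 (Or.inr hvC)
    · exact h.2 (Or.inr hvB)
  have hACD : A ∩ C ∩ D = ∅ := by
    ext v
    simp only [Set.mem_inter_iff, Set.mem_empty_iff_false, iff_false]
    rintro ⟨⟨hvA, hvC⟩, hvD⟩
    rcases hDsub hvD with (h | h) | h
    · exact h.2 (Or.inr hvC)
    · exact h.2 (Or.inl hvA)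
    · exact h.2 (Or.inl hvA)
  have hABD : A ∩ B ∩ D = ∅ := by
    ext v
    simp only [Set.mem_inter_iff, Set.mem_empty_iff_false, iff_false]
    rintro ⟨⟨hvA, hvB⟩, hvD⟩
    rcases hDsub hvD with (h | h) | h
    · exact h.2 (Or.inl hvB)
    · exact h.2 (Or.inl hvA)
    · exact h.2 (Or.inr hvB)
  -- cardinality decompositions
  have eA : A.ncard = (A \ (B ∪ C)).ncard + (A ∩ B).ncard + (C ∩ A).ncard := by
    apply ncard_three
    · ext v
      have h2 := hatmost2 v
      simp only [Set.mem_union, Set.mem_diff, Set.mem_inter_iff]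
      tauto
    · intro v h1 h2; exact h1.2 (Or.inl h2.2)
    · intro v h1 h2; exact h1.2 (Or.inr h2.1)
    · intro v h1 h2; exact hatmost2 v ⟨h1.1, h1.2, h2.1⟩
  have eB : B.ncard = (B \ (A ∪ C)).ncard + (A ∩ B).ncard + (B ∩ C).ncard := by
    apply ncard_three
    · ext v
      have h2 := hatmost2 v
      simp only [Set.mem_union, Set.mem_diff, Set.mem_inter_iff]
      tauto
    · intro v h1 h2; exact h1.2 (Or.inl h2.1)
    · intro v h1 h2; exact h1.2 (Or.inr h2.2)
    · intro v h1 h2; exact hatmost2 v ⟨h1.1, h1.2, h2.2⟩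
  have eC : C.ncard = (C \ (A ∪ B)).ncard + (B ∩ C).ncard + (C ∩ A).ncard := by
    apply ncard_three
    · ext v
      have h2 := hatmost2 v
      simp only [Set.mem_union, Set.mem_diff, Set.mem_inter_iff]
      tauto
    · intro v h1 h2; exact h1.2 (Or.inr h2.1)
    · intro v h1 h2; exact h1.2 (Or.inl h2.2)
    · intro v h1 h2; exact hatmost2 v ⟨h2.2, h1.1, h1.2⟩
  have eD : D.ncard = (D ∩ (A \ (B ∪ C))).ncard + (D ∩ (B \ (A ∪ C))).ncard
      + (D ∩ (C \ (A ∪ B))).ncard := by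
    apply ncard_three
    · ext v
      constructor
      · intro hv
        rcases hDsub hv with (h | h) | h
        · exact Or.inl (Or.inl ⟨hv, h⟩)
        · exact Or.inl (Or.inr ⟨hv, h⟩)
        · exact Or.inr ⟨hv, h⟩
      · rintro ((⟨hv, _⟩ | ⟨hv, _⟩) | ⟨hv, _⟩) <;> exact hv
    · intro v h1 h2; exact h1.2.2 (Or.inl h2.2.1)
    · intro v h1 h2; exact h1.2.2 (Or.inr h2.2.1)
    · intro v h1 h2; exact h1.2.2 (Or.inr h2.2.1)
  have bS : (D ∩ (A \ (B ∪ C))).ncard ≤ (A \ (B ∪ C)).ncard :=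
    Set.ncard_le_ncard Set.inter_subset_right (Set.toFinite _)
  have bT : (D ∩ (B \ (A ∪ C))).ncard ≤ (B \ (A ∪ C)).ncard :=
    Set.ncard_le_ncard Set.inter_subset_right (Set.toFinite _)
  have bU : (D ∩ (C \ (A ∪ B))).ncard ≤ (C \ (A ∪ B)).ncard :=
    Set.ncard_le_ncard Set.inter_subset_right (Set.toFinite _)
  -- the cycle obstruction for deletion minors
  have contraS : ∀ x : V, x ∈ A \ (B ∪ C) → x ∉ D →
      (D ∩ (B \ (A ∪ C))).Nonempty → (D ∩ (C \ (A ∪ B))).Nonempty → False := by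
    intro x hxS hxD hT hU
    have hxB : x ∉ B := fun h => hxS.2 (Or.inl h)
    have hxC : x ∉ C := fun h => hxS.2 (Or.inr h)
    refine minor_cycle_contra (X := B) (Y := C) (Z := D)
      ?_ ?_ ?_ ?_ ?_ ?_ hBCD (hdel x)
    · exact ⟨B, by simp, Or.inl ⟨hxB, rfl⟩⟩
    · exact ⟨C, by simp, Or.inl ⟨hxC, rfl⟩⟩
    · exact ⟨D, by simp, Or.inl ⟨hxD, rfl⟩⟩
    · obtain ⟨y, hy⟩ := Set.nonempty_of_ncard_ne_zero (s := B ∩ C) (by omega)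
      exact ⟨y, hy, fun h => hxB (h ▸ hy.1)⟩
    · obtain ⟨y, hyD, hyU⟩ := hU
      exact ⟨y, ⟨hyU.1, hyD⟩, fun h => hxD (h ▸ hyD)⟩
    · obtain ⟨y, hyD, hyT⟩ := hT
      exact ⟨y, ⟨hyT.1, hyD⟩, fun h => hxD (h ▸ hyD)⟩
  have contraT : ∀ x : V, x ∈ B \ (A ∪ C) → x ∉ D →
      (D ∩ (A \ (B ∪ C))).Nonempty → (D ∩ (C \ (A ∪ B))).Nonempty → False := by
    intro x hxT hxD hS hU
    have hxA : x ∉ A := fun h => hxT.2 (Or.inl h)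
    have hxC : x ∉ C := fun h => hxT.2 (Or.inr h)
    refine minor_cycle_contra (X := A) (Y := C) (Z := D)
      ?_ ?_ ?_ ?_ ?_ ?_ hACD (hdel x)
    · exact ⟨A, by simp, Or.inl ⟨hxA, rfl⟩⟩
    · exact ⟨C, by simp, Or.inl ⟨hxC, rfl⟩⟩
    · exact ⟨D, by simp, Or.inl ⟨hxD, rfl⟩⟩
    · obtain ⟨y, hy⟩ := Set.nonempty_of_ncard_ne_zero (s := C ∩ A) (by omega)
      exact ⟨y, ⟨hy.2, hy.1⟩, fun h => hxA (h ▸ hy.2)⟩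
    · obtain ⟨y, hyD, hyU⟩ := hU
      exact ⟨y, ⟨hyU.1, hyD⟩, fun h => hxD (h ▸ hyD)⟩
    · obtain ⟨y, hyD, hyS⟩ := hS
      exact ⟨y, ⟨hyS.1, hyD⟩, fun h => hxD (h ▸ hyD)⟩
  have contraU : ∀ x : V, x ∈ C \ (A ∪ B) → x ∉ D →
      (D ∩ (A \ (B ∪ C))).Nonempty → (D ∩ (B \ (A ∪ C))).Nonempty → False := by
    intro x hxU hxD hS hT
    have hxA : x ∉ A := fun h => hxU.2 (Or.inl h)
    have hxB : x ∉ B := fun h => hxU.2 (Or.inr h)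
    refine minor_cycle_contra (X := A) (Y := B) (Z := D)
      ?_ ?_ ?_ ?_ ?_ ?_ hABD (hdel x)
    · exact ⟨A, by simp, Or.inl ⟨hxA, rfl⟩⟩
    · exact ⟨B, by simp, Or.inl ⟨hxB, rfl⟩⟩
    · exact ⟨D, by simp, Or.inl ⟨hxD, rfl⟩⟩
    · obtain ⟨y, hy⟩ := Set.nonempty_of_ncard_ne_zero (s := A ∩ B) (by omega)
      exact ⟨y, hy, fun h => hxA (h ▸ hy.1)⟩
    · obtain ⟨y, hyD, hyT⟩ := hT
      exact ⟨y, ⟨hyT.1, hyD⟩, fun h => hxD (h ▸ hyD)⟩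
    · obtain ⟨y, hyD, hyS⟩ := hS
      exact ⟨y, ⟨hyS.1, hyD⟩, fun h => hxD (h ▸ hyD)⟩
  -- D meets each private region
  have hDSne : (D ∩ (A \ (B ∪ C))).Nonempty := by
    by_contra h
    have h0 : (D ∩ (A \ (B ∪ C))).ncard = 0 := by
      rw [Set.not_nonempty_iff_eq_empty] at h; rw [h]; exact Set.ncard_empty _
    obtain ⟨x, hx⟩ := Set.nonempty_of_ncard_ne_zero (s := A \ (B ∪ C)) (by omega)
    have hxD : x ∉ D := fun hvd =>
      h ⟨x, hvd, hx⟩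
    exact contraS x hx hxD (Set.nonempty_of_ncard_ne_zero (by omega))
      (Set.nonempty_of_ncard_ne_zero (by omega))
  have hDTne : (D ∩ (B \ (A ∪ C))).Nonempty := by
    by_contra h
    have h0 : (D ∩ (B \ (A ∪ C))).ncard = 0 := by
      rw [Set.not_nonempty_iff_eq_empty] at h; rw [h]; exact Set.ncard_empty _
    obtain ⟨x, hx⟩ := Set.nonempty_of_ncard_ne_zero (s := B \ (A ∪ C)) (by omega)
    have hxD : x ∉ D := fun hvd => h ⟨x, hvd, hx⟩
    exact contraT x hx hxD (Set.nonempty_of_ncard_ne_zero (by omega))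
      (Set.nonempty_of_ncard_ne_zero (by omega))
  have hDUne : (D ∩ (C \ (A ∪ B))).Nonempty := by
    by_contra h
    have h0 : (D ∩ (C \ (A ∪ B))).ncard = 0 := by
      rw [Set.not_nonempty_iff_eq_empty] at h; rw [h]; exact Set.ncard_empty _
    obtain ⟨x, hx⟩ := Set.nonempty_of_ncard_ne_zero (s := C \ (A ∪ B)) (by omega)
    have hxD : x ∉ D := fun hvd => h ⟨x, hvd, hx⟩
    exact contraU x hx hxD (Set.nonempty_of_ncard_ne_zero (by omega))
      (Set.nonempty_of_ncard_ne_zero (by omega))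
  -- D contains each private region
  have hSsub : A \ (B ∪ C) ⊆ D := fun x hx => by
    by_contra hxD
    exact contraS x hx hxD hDTne hDUne
  have hTsub : B \ (A ∪ C) ⊆ D := fun x hx => by
    by_contra hxD
    exact contraT x hx hxD hDSne hDUne
  have hUsub : C \ (A ∪ B) ⊆ D := fun x hx => by
    by_contra hxD
    exact contraU x hx hxD hDSne hDTne
  have hDeq : D = (A \ (B ∪ C)) ∪ (B \ (A ∪ C)) ∪ (C \ (A ∪ B)) :=
    Set.Subset.antisymm hDsub
      (Set.union_subset (Set.union_subset hSsub hTsub) hUsub)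
  -- |D| ≤ d
  have hle : D.ncard ≤ d := by
    by_contra h
    push_neg at h
    obtain ⟨x, hxD, hxS⟩ := hDSne
    have hxB : x ∉ B := fun hb => hxS.2 (Or.inl hb)
    have hxC : x ∉ C := fun hc => hxS.2 (Or.inr hc)
    refine minor_cycle_contra (X := B) (Y := C) (Z := D)
      ?_ ?_ ?_ ?_ ?_ ?_ hBCD (hdel x)
    · exact ⟨B, by simp, Or.inl ⟨hxB, rfl⟩⟩
    · exact ⟨C, by simp, Or.inl ⟨hxC, rfl⟩⟩
    · exact ⟨D, by simp, Or.inr ⟨hxD, h, rfl⟩⟩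
    · obtain ⟨y, hy⟩ := Set.nonempty_of_ncard_ne_zero (s := B ∩ C) (by omega)
      exact ⟨y, hy, fun he => hxB (he ▸ hy.1)⟩
    · obtain ⟨y, hyD, hyU⟩ := hDUne
      exact ⟨y, ⟨hyU.1, hyD⟩, fun he => hxC (he ▸ hyU.1)⟩
    · obtain ⟨y, hyD, hyT⟩ := hDTne
      exact ⟨y, ⟨hyT.1, hyD⟩, fun he => hxB (he ▸ hyT.1)⟩
  exact ⟨hDeq, le_antisymm hle hDcard⟩
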